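/- Let a < c < b, ρ = c − a, s = b − c, H an n×n real symmetric matrix, and K(x,t) the matrix-valued function with K(x,t) = (x−t)·I for a ≤ t ≤ x ≤ c or c ≤ t ≤ x ≤ b, and K(x,t) = (x−t)·I + (c−t)(x−c)·H for a ≤ t ≤ c ≤ x ≤ b. Then for each diagonal index i, ∫_a^b ∫_a^x |K(x,t)_{ii}|² dt dx ≥ (1/(3√3))·(ρs)²·(ρ+s)·|H_{ii} + (3/2)(1/ρ + 1/s)|. -/

import Mathlib

private lemma poly_int' (c0 c1 c2 c3 l r d : ℝ) :
    ∫ x in l..r, (c0 + c1 * (x - d) + c2 * (x - d) ^ 2 + c3 * (x - d) ^ 3) =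
      (c0 * (r - d) + c1 / 2 * (r - d) ^ 2 + c2 / 3 * (r - d) ^ 3 + c3 / 4 * (r - d) ^ 4)
        - (c0 * (l - d) + c1 / 2 * (l - d) ^ 2 + c2 / 3 * (l - d) ^ 3 + c3 / 4 * (l - d) ^ 4) := by
  have hd : ∀ x ∈ Set.uIcc l r,
      HasDerivAt (fun y : ℝ => c0 * (y - d) + c1 / 2 * (y - d) ^ 2 + c2 / 3 * (y - d) ^ 3
          + c3 / 4 * (y - d) ^ 4)
        (c0 + c1 * (x - d) + c2 * (x - d) ^ 2 + c3 * (x - d) ^ 3) x := by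
    intro x _
    have hbase : HasDerivAt (fun y : ℝ => y - d) 1 x := (hasDerivAt_id x).sub_const d
    have hp : ∀ k : ℕ, HasDerivAt (fun y : ℝ => (y - d) ^ k) ((k : ℝ) * (x - d) ^ (k - 1)) x := by
      intro k
      simpa [Function.comp_def] using (hasDerivAt_pow k (x - d)).comp x hbase
    have h0 : HasDerivAt (fun y : ℝ => c0 * (y - d)) (c0 * 1) x := hbase.const_mul c0
    have h1 := (hp 2).const_mul (c1 / 2)
    have h2 := (hp 3).const_mul (c2 / 3)
    have h3 := (hp 4).const_mul (c3 / 4)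
    have H : HasDerivAt _ _ x := ((h0.add h1).add h2).add h3
    refine H.congr_deriv ?_
    push_cast
    ring
  rw [intervalIntegral.integral_eq_sub_of_hasDerivAt hd
    ((by continuity :
      Continuous fun x : ℝ => c0 + c1 * (x - d) + c2 * (x - d) ^ 2 + c3 * (x - d) ^ 3).intervalIntegrable _ _)]

private lemma final_ineq (p s h : ℝ) (hp : 0 < p) (hs : 0 < s) :
    (p + s) ^ 4 / 12 + h * (p * s) ^ 2 * (p + s) / 3 + h ^ 2 * (p * s) ^ 3 / 9
      ≥ 1 / (3 * Real.sqrt 3) * (p * s) ^ 2 * (p + s) * |h + 3 / 2 * (1 / p + 1 / s)| := by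
  have h3 : Real.sqrt 3 ^ 2 = 3 := Real.sq_sqrt (by norm_num)
  have hr0 : (0:ℝ) < Real.sqrt 3 := Real.sqrt_pos.mpr (by norm_num)
  set q := h + 3 / 2 * (1 / p + 1 / s) with hq
  have key : (p + s) ^ 4 / 12 + h * (p * s) ^ 2 * (p + s) / 3 + h ^ 2 * (p * s) ^ 3 / 9
      = q ^ 2 * (p * s) ^ 3 / 9 + (p + s) ^ 4 / 12 - (p * s) * (p + s) ^ 2 / 4 := by
    rw [hq]
    field_simp
    ring
  rw [ge_iff_le, key, ← sq_abs q]
  have h13 : (1:ℝ) / (3 * Real.sqrt 3) = Real.sqrt 3 / 9 := by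
    rw [div_eq_div_iff (by positivity) (by norm_num)]
    nlinarith [h3]
  rw [h13]
  nlinarith [mul_nonneg (mul_pos hp hs).le
      (sq_nonneg (2 * (p * s) * |q| - (p + s) * Real.sqrt 3)),
    mul_nonneg (sq_nonneg (p + s)) (sq_nonneg (p - s)),
    mul_nonneg (mul_pos hp hs).le (sq_nonneg (p + s)),
    h3, abs_nonneg q, mul_pos hp hs]

set_option maxHeartbeats 1000000 in
theorem stmt_13 (n : ℕ) (a c b : ℝ) (hac : a < c) (hcb : c < b)
    (H : Matrix (Fin n) (Fin n) ℝ) (hH : H.IsSymm)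
    (K : ℝ → ℝ → Matrix (Fin n) (Fin n) ℝ)
    (hK : ∀ x t, K x t = if t ≤ c ∧ c ≤ x
      then (x - t) • (1 : Matrix (Fin n) (Fin n) ℝ) + ((c - t) * (x - c)) • H
      else (x - t) • (1 : Matrix (Fin n) (Fin n) ℝ))
    (i : Fin n) :
    ∫ x in a..b, (∫ t in a..x, |K x t i i| ^ 2)
      ≥ (1 / (3 * Real.sqrt 3)) * ((c - a) * (b - c)) ^ 2 * ((c - a) + (b - c))
        * |H i i + (3 / 2) * (1 / (c - a) + 1 / (b - c))| := by
  have hEntry : ∀ x t, K x t i i =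
      if t ≤ c ∧ c ≤ x then (x - t) + (c - t) * (x - c) * (H i i) else (x - t) := by
    intro x t
    rw [hK]
    split_ifs <;>
      simp [Matrix.add_apply, Matrix.smul_apply, Matrix.one_apply_eq, smul_eq_mul]
  -- inner integral, case x ≤ c
  have innerA : ∀ x : ℝ, x ≤ c → (∫ t in a..x, |K x t i i| ^ 2) = (x - a) ^ 3 / 3 := by
    intro x hx
    have h1 : (∫ t in a..x, |K x t i i| ^ 2)
        = ∫ t in a..x, (x ^ 2 + (-(2 * x)) * (t - 0) + 1 * (t - 0) ^ 2 + 0 * (t - 0) ^ 3) := by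
      apply intervalIntegral.integral_congr
      intro t _
      have hk : K x t i i = x - t := by
        rw [hEntry]
        split_ifs with htc
        · have hxc : x = c := le_antisymm hx htc.2
          rw [hxc]; ring
        · rfl
      show |K x t i i| ^ 2 = _
      rw [hk, sq_abs]; ring
    rw [h1, poly_int']
    ring
  -- inner integral, case c ≤ x
  have innerB : ∀ x : ℝ, c ≤ x → (∫ t in a..x, |K x t i i| ^ 2) =
      (c - a) ^ 3 / 3 + ((x - c) ^ 3 / 3 + (x - c) ^ 2 * (c - a)
        + (x - c) * (1 + (x - c) * H i i) * (c - a) ^ 2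
        + ((1 + (x - c) * H i i) ^ 2 - 1) * (c - a) ^ 3 / 3) := by
    intro x hx
    have hg : (∫ t in a..x, |K x t i i| ^ 2)
        = ∫ t in a..x, ((x - t) + max (c - t) 0 * ((x - c) * H i i)) ^ 2 := by
      apply intervalIntegral.integral_congr
      intro t _
      have hk : K x t i i = (x - t) + max (c - t) 0 * ((x - c) * H i i) := by
        rw [hEntry]
        split_ifs with htc
        · rw [max_eq_left (by linarith [htc.1] : (0:ℝ) ≤ c - t)]; ring
        · push_neg at htc
          rcases le_or_gt t c with h1 | h1
          · exact absurd hx (not_le.mpr (htc h1))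
          · rw [max_eq_right (by linarith : c - t ≤ 0)]; ring
      show |K x t i i| ^ 2 = _
      rw [hk, sq_abs]
    rw [hg]
    have hcont : Continuous fun t : ℝ => ((x - t) + max (c - t) 0 * ((x - c) * H i i)) ^ 2 := by
      continuity
    rw [← intervalIntegral.integral_add_adjacent_intervals (a := a) (b := c) (c := x)
        (hcont.intervalIntegrable _ _) (hcont.intervalIntegrable _ _)]
    have h2 : (∫ t in a..c, ((x - t) + max (c - t) 0 * ((x - c) * H i i)) ^ 2)
        = ∫ t in a..c, ((x + c * (x - c) * H i i) ^ 2
            + (-(2 * (x + c * (x - c) * H i i) * (1 + (x - c) * H i i))) * (t - 0)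
            + ((1 + (x - c) * H i i) ^ 2) * (t - 0) ^ 2 + 0 * (t - 0) ^ 3) := by
      apply intervalIntegral.integral_congr
      intro t ht
      rw [Set.uIcc_of_le hac.le] at ht
      show ((x - t) + max (c - t) 0 * ((x - c) * H i i)) ^ 2 = _
      rw [max_eq_left (by linarith [ht.2] : (0:ℝ) ≤ c - t)]
      ring
    have h3 : (∫ t in c..x, ((x - t) + max (c - t) 0 * ((x - c) * H i i)) ^ 2)
        = ∫ t in c..x, (x ^ 2 + (-(2 * x)) * (t - 0) + 1 * (t - 0) ^ 2 + 0 * (t - 0) ^ 3) := by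
      apply intervalIntegral.integral_congr
      intro t ht
      rw [Set.uIcc_of_le hx] at ht
      show ((x - t) + max (c - t) 0 * ((x - c) * H i i)) ^ 2 = _
      rw [max_eq_right (by linarith [ht.1] : c - t ≤ 0)]
      ring
    rw [h2, h3, poly_int', poly_int']
    ring
  -- replace the inner integral by a single continuous function G
  set G : ℝ → ℝ := fun x => (min x c - a) ^ 3 / 3 + ((max (x - c) 0) ^ 3 / 3
      + (max (x - c) 0) ^ 2 * (c - a)
      + (max (x - c) 0) * (1 + (max (x - c) 0) * H i i) * (c - a) ^ 2
      + ((1 + (max (x - c) 0) * H i i) ^ 2 - 1) * (c - a) ^ 3 / 3) with hG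
  have hOuter : Set.EqOn (fun x => ∫ t in a..x, |K x t i i| ^ 2) G (Set.uIcc a b) := by
    intro x _
    show (∫ t in a..x, |K x t i i| ^ 2) = G x
    rcases le_total x c with h1 | h1
    · rw [innerA x h1, hG]
      simp only [min_eq_left h1, max_eq_right (by linarith : x - c ≤ 0)]
      ring
    · rw [innerB x h1, hG]
      simp only [min_eq_right h1, max_eq_left (by linarith : (0:ℝ) ≤ x - c)]
  rw [intervalIntegral.integral_congr hOuter]
  have hmin : Continuous fun x : ℝ => min x c := continuous_id.min continuous_const
  have hmax : Continuous fun x : ℝ => max (x - c) 0 :=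
    (continuous_id.sub continuous_const).max continuous_const
  have hGcont : Continuous G := by
    rw [hG]
    fun_prop
  rw [← intervalIntegral.integral_add_adjacent_intervals (a := a) (b := c) (c := b)
      (hGcont.intervalIntegrable _ _) (hGcont.intervalIntegrable _ _)]
  have hp1 : (∫ x in a..c, G x)
      = ∫ x in a..c, ((0:ℝ) + 0 * (x - a) + 0 * (x - a) ^ 2 + (1/3) * (x - a) ^ 3) := by
    apply intervalIntegral.integral_congr
    intro x hx
    rw [Set.uIcc_of_le hac.le] at hx
    show G x = _
    rw [hG]
    simp only [min_eq_left hx.2, max_eq_right (by linarith [hx.2] : x - c ≤ 0)]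
    ring
  have hp2 : (∫ x in c..b, G x)
      = ∫ x in c..b, (((c-a)^3/3) + ((c-a)^2 + 2 * H i i * (c-a)^3/3) * (x - c)
          + ((c-a) + H i i * (c-a)^2 + (H i i)^2 * (c-a)^3/3) * (x - c) ^ 2
          + (1/3) * (x - c) ^ 3) := by
    apply intervalIntegral.integral_congr
    intro x hx
    rw [Set.uIcc_of_le hcb.le] at hx
    show G x = _
    rw [hG]
    simp only [min_eq_right hx.1, max_eq_left (by linarith [hx.1] : (0:ℝ) ≤ x - c)]
    ring
  rw [hp1, hp2, poly_int', poly_int']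
  have hfin := final_ineq (c - a) (b - c) (H i i) (by linarith) (by linarith)
  exact le_trans hfin (le_of_eq (by ring))
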